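/- For every integer k ≥ 2, the series Σ_{n=1}^∞ (−1)^{n−1}·(log k − (H_{kn} − H_n)) converges and its sum equals ∫₀¹ (Q_k′(t)/Q_k(t)) · t^k/(1+t^k) dt, where Q_k(t) = 1 + t + ⋯ + t^{k−1}. -/

import Mathlib

open Filter Topology intervalIntegral

/-- The `n`-th harmonic number `Hₙ = Σ_{j=1}^n 1/j`. -/
noncomputable def H (n : ℕ) : ℝ := ∑ j ∈ Finset.range n, 1 / ((j : ℝ) + 1)

/-- The polynomial `Q_k(t) = 1 + t + ⋯ + t^{k−1}`. -/
noncomputable def Q (k : ℕ) : ℝ → ℝ := fun t => ∑ i ∈ Finset.range k, t ^ i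

noncomputable def D (k : ℕ) : ℝ → ℝ := fun t => ∑ i ∈ Finset.range (k - 1), ((i : ℝ) + 1) * t ^ i

lemma hasDerivAt_Q (k : ℕ) (t : ℝ) : HasDerivAt (Q k) (D k t) t := by
  have h : HasDerivAt (Q k) (∑ i ∈ Finset.range k, (i : ℝ) * t ^ (i - 1)) t := by
    unfold Q
    exact HasDerivAt.fun_sum fun i _ => hasDerivAt_pow i t
  have he : (∑ i ∈ Finset.range k, (i : ℝ) * t ^ (i - 1)) = D k t := by
    cases k with
    | zero => simp [D]
    | succ m =>
      rw [Finset.sum_range_succ']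
      simp [D]
  rwa [he] at h

lemma deriv_Q (k : ℕ) (t : ℝ) : deriv (Q k) t = D k t := (hasDerivAt_Q k t).deriv

lemma Q_pos (k : ℕ) (hk : 1 ≤ k) {t : ℝ} (ht : 0 ≤ t) : 0 < Q k t := by
  have h1 : (1 : ℝ) ≤ Q k t := by
    have := Finset.single_le_sum (f := fun i => t ^ i)
      (fun i _ => pow_nonneg ht i) (Finset.mem_range.mpr (by omega : 0 < k))
    simpa [Q] using this
  linarith

lemma Q_one (k : ℕ) : Q k 1 = k := by simp [Q]

lemma Q_zero (k : ℕ) (hk : 1 ≤ k) : Q k 0 = 1 := by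
  obtain ⟨m, rfl⟩ : ∃ m, k = m + 1 := ⟨k - 1, by omega⟩
  rw [Q, Finset.sum_range_succ']
  simp

lemma cont_Q (k : ℕ) : Continuous (Q k) := by
  unfold Q; exact continuous_finset_sum _ fun i _ => by fun_prop

lemma cont_D (k : ℕ) : Continuous (D k) := by
  unfold D; exact continuous_finset_sum _ fun i _ => by fun_prop

lemma key_poly (t : ℝ) (m : ℕ) :
    (∑ i ∈ Finset.range m, ((i : ℝ) + 1) * t ^ i) * (1 - t)
      = (∑ i ∈ Finset.range (m + 1), t ^ i) - ((m : ℝ) + 1) * t ^ m := by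
  induction m with
  | zero => simp
  | succ m ih =>
    rw [Finset.sum_range_succ, add_mul, ih, Finset.sum_range_succ (fun i => t ^ i) (m + 1)]
    push_cast
    ring

lemma D_mul (k : ℕ) (hk : 1 ≤ k) (t : ℝ) :
    D k t * (1 - t) = Q k t - (k : ℝ) * t ^ (k - 1) := by
  have h := key_poly t (k - 1)
  have h1 : k - 1 + 1 = k := by omega
  have h2 : ((k - 1 : ℕ) : ℝ) + 1 = (k : ℝ) := by
    rw [Nat.cast_sub hk]; ring
  rw [h1, h2] at h
  exact h

lemma H_mul (k n : ℕ) :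
    H (k * n) = ∑ j ∈ Finset.range n, ∑ i ∈ Finset.range k, 1 / ((k * j + i : ℝ) + 1) := by
  induction n with
  | zero => simp [H]
  | succ n ih =>
    have : k * (n + 1) = k * n + k := by ring
    rw [this, H, Finset.sum_range_add, ← H, ih, Finset.sum_range_succ]
    push_cast
    simp [add_comm, one_div]

-- integral of Q * t^(k j)
lemma int_Q_mono (k j : ℕ) :
    ∫ t in (0:ℝ)..1, Q k t * t ^ (k * j)
      = ∑ i ∈ Finset.range k, 1 / ((k * j + i : ℝ) + 1) := by
  have hpt : ∀ t : ℝ, Q k t * t ^ (k * j) = ∑ i ∈ Finset.range k, t ^ (i + k * j) := by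
    intro t
    rw [Q, Finset.sum_mul]
    exact Finset.sum_congr rfl fun i _ => by rw [pow_add]
  simp_rw [hpt]
  rw [intervalIntegral.integral_finset_sum
    (fun i _ => (intervalIntegral.intervalIntegrable_pow _))]
  refine Finset.sum_congr rfl fun i _ => ?_
  rw [integral_pow]
  push_cast
  ring_nf

lemma contOn_g (k : ℕ) (hk : 1 ≤ k) :
    ContinuousOn (fun t => deriv (Q k) t / Q k t) (Set.Icc (0:ℝ) 1) := by
  have he : (fun t : ℝ => deriv (Q k) t / Q k t) = fun t => D k t / Q k t := by
    funext t; rw [deriv_Q]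
  rw [he]
  exact ((cont_D k).continuousOn).div ((cont_Q k).continuousOn)
    (fun t ht => (Q_pos k hk ht.1).ne')

lemma intble_g (k : ℕ) (hk : 1 ≤ k) :
    IntervalIntegrable (fun t => deriv (Q k) t / Q k t) MeasureTheory.volume 0 1 :=
  (contOn_g k hk).intervalIntegrable_of_Icc zero_le_one

lemma int_g (k : ℕ) (hk : 1 ≤ k) :
    ∫ t in (0:ℝ)..1, deriv (Q k) t / Q k t = Real.log k := by
  rw [intervalIntegral.integral_eq_sub_of_hasDerivAt
    (f := fun t => Real.log (Q k t))
    (f' := fun t => deriv (Q k) t / Q k t)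
    (fun x hx => by
      rw [Set.uIcc_of_le zero_le_one] at hx
      have h := (hasDerivAt_Q k x).log (Q_pos k hk hx.1).ne'
      show HasDerivAt (fun t => Real.log (Q k t)) (deriv (Q k) x / Q k x) x
      rw [deriv_Q]
      exact h)
    (intble_g k hk)]
  rw [Q_one, Q_zero k hk, Real.log_one, sub_zero]

lemma per_term (k : ℕ) (hk : 2 ≤ k) (n : ℕ) :
    ∫ t in (0:ℝ)..1, (deriv (Q k) t / Q k t) * t ^ (k * n)
      = Real.log k - (H (k * n) - H n) := by
  have hk1 : 1 ≤ k := by omega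
  set P : ℝ → ℝ := fun t =>
    (Q k t - (k : ℝ) * t ^ (k - 1)) * ∑ j ∈ Finset.range n, (t ^ k) ^ j with hP
  have hcontP : Continuous P :=
    ((cont_Q k).sub (by fun_prop)).mul (continuous_finset_sum _ fun j _ => by fun_prop)
  have hpt : ∀ t ∈ Set.Icc (0:ℝ) 1,
      (deriv (Q k) t / Q k t) * t ^ (k * n) = deriv (Q k) t / Q k t - P t := by
    intro t ht
    have hQ : Q k t ≠ 0 := (Q_pos k hk1 ht.1).ne'
    have h1 : (1 - t ^ k) = (1 - t) * Q k t := by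
      have := geom_sum_mul t k
      rw [Q]; linarith [this]
    have h2 : (1 - t ^ (k * n)) = (1 - t ^ k) * ∑ j ∈ Finset.range n, (t ^ k) ^ j := by
      have := geom_sum_mul (t ^ k) n
      rw [pow_mul]
      linarith [this]
    have h3 : deriv (Q k) t / Q k t * (1 - t ^ (k * n)) = P t := by
      rw [deriv_Q, h2, h1, hP]
      field_simp
      rw [← D_mul k hk1 t]
      ring
    have : deriv (Q k) t / Q k t * t ^ (k * n)
        = deriv (Q k) t / Q k t - deriv (Q k) t / Q k t * (1 - t ^ (k * n)) := by ring
    rw [this, h3]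
  -- rewrite the integral using the pointwise identity
  rw [intervalIntegral.integral_congr (g := fun t => deriv (Q k) t / Q k t - P t)
    (by rw [Set.uIcc_of_le zero_le_one]; exact fun t ht => hpt t ht)]
  rw [intervalIntegral.integral_sub (intble_g k hk1)
    (hcontP.intervalIntegrable 0 1), int_g k hk1]
  congr 1
  -- ∫ P = H (k n) - H n
  have hPint : ∫ t in (0:ℝ)..1, P t = H (k * n) - H n := by
    have hexp : ∀ t : ℝ, P t = ∑ j ∈ Finset.range n,
        (Q k t * t ^ (k * j) - (k : ℝ) * t ^ ((k - 1) + k * j)) := by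
      intro t
      simp only [hP, Finset.mul_sum]
      refine Finset.sum_congr rfl fun j _ => ?_
      rw [← pow_mul t k j, pow_add]
      ring
    simp_rw [hexp]
    rw [intervalIntegral.integral_finset_sum (fun j _ => by
      apply IntervalIntegrable.sub
      · exact (((cont_Q k).mul (by fun_prop)).intervalIntegrable 0 1)
      · exact ((by fun_prop : Continuous fun t : ℝ => (k:ℝ) * t ^ ((k-1) + k*j)).intervalIntegrable 0 1))]
    have hterm : ∀ j : ℕ,
        (∫ t in (0:ℝ)..1, (Q k t * t ^ (k * j) - (k : ℝ) * t ^ ((k - 1) + k * j)))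
        = (∑ i ∈ Finset.range k, 1 / ((k * j + i : ℝ) + 1)) - 1 / ((j : ℝ) + 1) := by
      intro j
      rw [intervalIntegral.integral_sub
        (((cont_Q k).fun_mul (by fun_prop)).intervalIntegrable 0 1)
        ((by fun_prop : Continuous fun t : ℝ => (k:ℝ) * t ^ ((k-1) + k*j)).intervalIntegrable 0 1),
        int_Q_mono]
      congr 1
      rw [intervalIntegral.integral_const_mul, integral_pow]
      have hc : ((k - 1 + k * j : ℕ) : ℝ) + 1 = (k : ℝ) * ((j : ℝ) + 1) := by
        push_cast [Nat.cast_sub hk1]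
        ring
      rw [hc]
      have hkne : (k : ℝ) ≠ 0 := by positivity
      have hjne : ((j : ℝ) + 1) ≠ 0 := by positivity
      field_simp
      simp
    simp_rw [hterm]
    rw [Finset.sum_sub_distrib, ← H_mul]
    simp [H]
  rw [hPint]


/-- For `k ≥ 2`, the series `Σ_{n=1}^∞ (−1)^{n−1}(log k − (H_{kn} − H_n))` converges,
with sum `∫₀¹ (Q_k′(t)/Q_k(t)) · t^k/(1+t^k) dt`. -/
theorem stmt_9 (k : ℕ) (hk : 2 ≤ k) :
    Tendsto (fun m => ∑ n ∈ Finset.range m,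
        (-1 : ℝ) ^ n * (Real.log k - (H (k * (n + 1)) - H (n + 1))))
      atTop
      (𝓝 (∫ t in (0:ℝ)..1, (deriv (Q k) t / Q k t) * (t ^ k / (1 + t ^ k)))) := by
  have hk1 : 1 ≤ k := by omega
  set g : ℝ → ℝ := fun t => deriv (Q k) t / Q k t with hg
  set I : ℝ := ∫ t in (0:ℝ)..1, g t * (t ^ k / (1 + t ^ k)) with hI
  have hgc : ContinuousOn g (Set.Icc (0:ℝ) 1) := contOn_g k hk1
  -- continuity of the fraction integrands
  have hfc : ∀ a : ℕ, ContinuousOn (fun t : ℝ => g t * (t ^ a / (1 + t ^ k)))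
      (Set.Icc (0:ℝ) 1) := by
    intro a
    refine hgc.mul (((continuous_pow a).continuousOn).div
      ((by fun_prop : Continuous fun t : ℝ => 1 + t ^ k).continuousOn) ?_)
    intro t ht
    have h0 : (0:ℝ) ≤ t ^ k := pow_nonneg ht.1 k
    positivity
  set E : ℕ → ℝ := fun m => ∫ t in (0:ℝ)..1, g t * (t ^ (k * (m + 1)) / (1 + t ^ k)) with hE
  set C : ℝ := D k 1 with hC
  have hDnn : ∀ t : ℝ, 0 ≤ t → 0 ≤ D k t := fun t ht =>
    Finset.sum_nonneg fun i _ => by positivity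
  have hCnn : 0 ≤ C := hDnn 1 zero_le_one
  have hgb : ∀ t ∈ Set.Icc (0:ℝ) 1, |g t| ≤ C := by
    intro t ht
    have hQ := Q_pos k hk1 ht.1
    have hQ1 : (1:ℝ) ≤ Q k t := by
      have := Finset.single_le_sum (f := fun i => t ^ i)
        (fun i _ => pow_nonneg ht.1 i) (Finset.mem_range.mpr (by omega : 0 < k))
      simpa [Q] using this
    have hDt : D k t ≤ C := by
      refine Finset.sum_le_sum fun i _ => ?_
      have h1 : t ^ i ≤ 1 := pow_le_one₀ ht.1 ht.2
      have h2 : (0:ℝ) ≤ (i:ℝ) + 1 := by positivity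
      rw [one_pow]
      nlinarith
    rw [hg]
    simp only [deriv_Q]
    rw [abs_div, abs_of_pos hQ, abs_of_nonneg (hDnn t ht.1)]
    calc D k t / Q k t ≤ D k t := div_le_self (hDnn t ht.1) hQ1
      _ ≤ C := hDt
  -- the partial sum identity
  have hS : ∀ m : ℕ, (∑ n ∈ Finset.range m,
      (-1 : ℝ) ^ n * (Real.log k - (H (k * (n + 1)) - H (n + 1))))
      = I + (-1 : ℝ) ^ (m + 1) * E m := by
    intro m
    have h1 : ∀ n : ℕ, (-1 : ℝ) ^ n * (Real.log k - (H (k * (n + 1)) - H (n + 1)))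
        = ∫ t in (0:ℝ)..1, (-1 : ℝ) ^ n * (g t * t ^ (k * (n + 1))) := by
      intro n
      rw [intervalIntegral.integral_const_mul, hg]
      simp only []
      rw [per_term k hk (n + 1)]
    simp_rw [h1]
    rw [← intervalIntegral.integral_finset_sum (fun n _ =>
      (((continuousOn_const (c := (-1:ℝ)^n)).fun_mul
        (hgc.fun_mul (continuous_pow _).continuousOn)).intervalIntegrable_of_Icc zero_le_one))]
    have hcongr : ∀ t ∈ Set.Icc (0:ℝ) 1,
        (∑ n ∈ Finset.range m, (-1 : ℝ) ^ n * (g t * t ^ (k * (n + 1))))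
        = g t * (t ^ k / (1 + t ^ k))
          + (-1 : ℝ) ^ (m + 1) * (g t * (t ^ (k * (m + 1)) / (1 + t ^ k))) := by
      intro t ht
      set u : ℝ := t ^ k with hu
      have hun : 0 ≤ u := pow_nonneg ht.1 k
      have hne : -u ≠ 1 := by intro h; nlinarith
      have h1u : (1:ℝ) + u ≠ 0 := by positivity
      have hterm : ∀ n : ℕ, (-1 : ℝ) ^ n * (g t * t ^ (k * (n + 1)))
          = g t * (u * (-u) ^ n) := by
        intro n
        rw [pow_mul, ← hu, neg_pow, pow_succ]
        ring
      simp_rw [hterm]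
      rw [← Finset.mul_sum, ← Finset.mul_sum, geom_sum_eq hne]
      have hpm : t ^ (k * (m + 1)) = u ^ (m + 1) := by rw [pow_mul]
      rw [hpm]
      have hne2 : -u - 1 ≠ 0 := by intro h; nlinarith
      have : u * (((-u) ^ m - 1) / (-u - 1))
          = u / (1 + u) + (-1 : ℝ) ^ (m + 1) * (u ^ (m + 1) / (1 + u)) := by
        have h2 : u / (1 + u) + (-1 : ℝ) ^ (m + 1) * (u ^ (m + 1) / (1 + u))
            = (u + (-1 : ℝ) ^ (m + 1) * u ^ (m + 1)) / (1 + u) := by ring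
        rw [h2, ← mul_div_assoc, div_eq_div_iff hne2 h1u, neg_pow]
        ring
      rw [this]
      ring
    rw [intervalIntegral.integral_congr (g := fun t =>
        g t * (t ^ k / (1 + t ^ k))
          + (-1 : ℝ) ^ (m + 1) * (g t * (t ^ (k * (m + 1)) / (1 + t ^ k))))
      (by rw [Set.uIcc_of_le zero_le_one]; exact hcongr)]
    rw [intervalIntegral.integral_add
      ((hfc k).intervalIntegrable_of_Icc zero_le_one)
      (((continuousOn_const).fun_mul (hfc (k * (m + 1)))).intervalIntegrable_of_Icc zero_le_one),
      intervalIntegral.integral_const_mul]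
  -- bound on E
  have hEb : ∀ m : ℕ, |E m| ≤ C / ((m : ℝ) + 1) := by
    intro m
    have hab : |E m| ≤ ∫ t in (0:ℝ)..1, |g t * (t ^ (k * (m + 1)) / (1 + t ^ k))| :=
      intervalIntegral.abs_integral_le_integral_abs zero_le_one
    have hmono : (∫ t in (0:ℝ)..1, |g t * (t ^ (k * (m + 1)) / (1 + t ^ k))|)
        ≤ ∫ t in (0:ℝ)..1, C * t ^ (k * (m + 1)) := by
      refine intervalIntegral.integral_mono_on zero_le_one
        ((hfc (k * (m + 1))).abs.intervalIntegrable_of_Icc zero_le_one)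
        ((by fun_prop : Continuous fun t : ℝ => C * t ^ (k * (m + 1))).intervalIntegrable 0 1)
        (fun t ht => ?_)
      have h0 : (0:ℝ) ≤ t ^ (k * (m + 1)) := pow_nonneg ht.1 _
      have hu : (0:ℝ) ≤ t ^ k := pow_nonneg ht.1 _
      have hfrac : |t ^ (k * (m + 1)) / (1 + t ^ k)| ≤ t ^ (k * (m + 1)) := by
        rw [abs_of_nonneg (by positivity)]
        exact div_le_self h0 (by linarith)
      calc |g t * (t ^ (k * (m + 1)) / (1 + t ^ k))|
          = |g t| * |t ^ (k * (m + 1)) / (1 + t ^ k)| := abs_mul _ _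
        _ ≤ C * t ^ (k * (m + 1)) :=
            mul_le_mul (hgb t ht) hfrac (abs_nonneg _) hCnn
    have hval : (∫ t in (0:ℝ)..1, C * t ^ (k * (m + 1)))
        = C / ((k * (m + 1) : ℝ) + 1) := by
      rw [intervalIntegral.integral_const_mul, integral_pow]
      push_cast
      ring
    have hle : C / ((k * (m + 1) : ℝ) + 1) ≤ C / ((m : ℝ) + 1) := by
      have h1 : (0:ℝ) < (m : ℝ) + 1 := by positivity
      have h2 : ((m : ℝ) + 1) ≤ (k * (m + 1) : ℝ) + 1 := by
        have : (1:ℝ) ≤ (k : ℝ) := by exact_mod_cast hk1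
        nlinarith [Nat.cast_nonneg (α := ℝ) m]
      gcongr
    calc |E m| ≤ _ := hab
      _ ≤ _ := hmono
      _ = _ := hval
      _ ≤ _ := hle
  -- conclude
  have hlim : Tendsto (fun m : ℕ => C / ((m : ℝ) + 1)) atTop (𝓝 0) := by
    have h0 := tendsto_const_div_atTop_nhds_zero_nat C
    have h1 := h0.comp (tendsto_add_atTop_nat 1)
    refine h1.congr fun m => ?_
    push_cast [Function.comp]
    ring
  have hdist : Tendsto (fun m : ℕ => dist (∑ n ∈ Finset.range m,
      (-1 : ℝ) ^ n * (Real.log k - (H (k * (n + 1)) - H (n + 1)))) I) atTop (𝓝 0) :=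
    squeeze_zero (fun m => dist_nonneg) (fun m => by
      rw [Real.dist_eq, hS m]
      have h2 : I + (-1 : ℝ) ^ (m + 1) * E m - I = (-1 : ℝ) ^ (m + 1) * E m := by ring
      rw [h2, abs_mul, abs_pow, abs_neg, abs_one, one_pow, one_mul]
      exact hEb m) hlim
  exact tendsto_iff_dist_tendsto_zero.mpr hdist
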